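/- For every integer m, the greatest common divisor of m^2 - 2m + 9 and 9m^2 - 2m + 1 divides 24. -/

import Mathlib

set_option maxRecDepth 4000

theorem stmt_3 (m : ℤ) :
    (Int.gcd (m ^ 2 - 2 * m + 9) (9 * m ^ 2 - 2 * m + 1) : ℤ) ∣ 24 := by
  set g : ℤ := (Int.gcd (m ^ 2 - 2 * m + 9) (9 * m ^ 2 - 2 * m + 1) : ℤ) with hg
  have h1 : g ∣ m ^ 2 - 2 * m + 9 := Int.gcd_dvd_left _ _
  have h2 : g ∣ 9 * m ^ 2 - 2 * m + 1 := Int.gcd_dvd_right _ _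
  have h3 : g ∣ 16 * (m - 5) := by
    have := dvd_sub (h1.mul_left 9) h2
    have e : 9 * (m ^ 2 - 2 * m + 9) - (9 * m ^ 2 - 2 * m + 1) = -(16 * (m - 5)) := by ring
    rw [e] at this
    exact (dvd_neg).mp this
  have h384 : g ∣ 384 := by
    have := dvd_sub (h1.mul_left 16) (h3.mul_left (m + 3))
    have e : 16 * (m ^ 2 - 2 * m + 9) - (m + 3) * (16 * (m - 5)) = 384 := by ring
    rwa [e] at this
  have h16 : ¬ (16 : ℤ) ∣ m ^ 2 - 2 * m + 9 := by
    intro h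
    have : ((m ^ 2 - 2 * m + 9 : ℤ) : ZMod 16) = 0 := by
      exact_mod_cast (ZMod.intCast_zmod_eq_zero_iff_dvd _ 16).mpr h
    push_cast at this
    revert this
    have : ∀ x : ZMod 16, x ^ 2 - 2 * x + 9 ≠ 0 := by decide
    exact this _
  have h16g : ¬ (16 : ℤ) ∣ g := fun h => h16 (h.trans h1)
  -- move to ℕ
  lift g to ℕ using Int.natCast_nonneg _ with n hn
  have hn384 : n ∣ 384 := by exact_mod_cast h384
  have hn16 : ¬ (16 : ℕ) ∣ n := by
    intro h
    exact h16g (by exact_mod_cast h)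
  have key : ∀ k, k < 385 → k ∣ 384 → ¬ 16 ∣ k → k ∣ 24 := by decide
  have : n ∣ 24 := key n (Nat.lt_succ_of_le (Nat.le_of_dvd (by norm_num) hn384)) hn384 hn16
  exact_mod_cast this
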